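/- In dimension 3, the Clifford homomorphisms satisfy: -(j+1/2)·((2j+3)/(4(j+1)))π⁻_{j+1}(e_k)π⁺_j(e_l) + (1/((2j+3)(2j+1)))π_j(e_k)π_j(e_l) + (j+3/2)·((2j+1)/(4(j+1)))π⁺_{j-1}(e_k)π⁻_j(e_l) = (1/4)π_j([e_k,e_l]) as maps W_j → W_j. -/

import Mathlib

set_option linter.unusedSectionVars false
set_option maxHeartbeats 1000000

/-- The Levi-Civita symbol on `Fin 3`. -/
def epsLC (i j k : Fin 3) : ℤ :=
  ((j.val : ℤ) - i.val) * ((k.val : ℤ) - j.val) * ((k.val : ℤ) - i.val) / 2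

/-- `φ ⊗ e_k ∈ W ⊗ ℂ³`, with `W ⊗ ℂ³` modelled as `PiLp 2 (Fin 3 → W)`. -/
noncomputable def tensE (W : Type*) [NormedAddCommGroup W] [InnerProductSpace ℂ W]
    (k : Fin 3) : W →ₗ[ℂ] PiLp 2 fun _ : Fin 3 => W :=
  (WithLp.linearEquiv 2 ℂ (∀ _ : Fin 3, W)).symm.toLinearMap ∘ₗ
    LinearMap.single ℂ (fun _ : Fin 3 => W) k

section Aux

variable {W : Type*} [NormedAddCommGroup W] [InnerProductSpace ℂ W] [FiniteDimensional ℂ W]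

/-- Coordinate evaluation `W ⊗ ℂ³ → W`. -/
noncomputable def evE (k : Fin 3) : (PiLp 2 fun _ : Fin 3 => W) →ₗ[ℂ] W :=
  LinearMap.proj k ∘ₗ (WithLp.linearEquiv 2 ℂ (∀ _ : Fin 3, W)).toLinearMap

lemma tensE_coord (k : Fin 3) (φ : W) (m : Fin 3) :
    WithLp.equiv 2 (∀ _ : Fin 3, W) (tensE W k φ) m = if m = k then φ else 0 := by
  simp [tensE, Pi.single_apply]

lemma adjoint_tensE (k : Fin 3) : LinearMap.adjoint (tensE W k) = evE k := by
  rw [← LinearMap.adjoint_adjoint (evE (W := W) k)]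
  congr 1
  rw [LinearMap.eq_adjoint_iff]
  intro x y
  rw [PiLp.inner_apply]
  rw [Finset.sum_eq_single k]
  · simp [tensE, evE]
  · intro b _ hb
    simp [tensE, Pi.single_apply, hb]
  · simp

lemma evE_apply (b : Fin 3) (x : PiLp 2 fun _ : Fin 3 => W) :
    evE b x = WithLp.equiv 2 (∀ _ : Fin 3, W) x b := rfl

lemma ext_coord {x y : PiLp 2 fun _ : Fin 3 => W}
    (h : ∀ b, evE b x = evE b y) : x = y :=
  (WithLp.equiv 2 (∀ _ : Fin 3, W)).injective (funext h)

lemma evE_tensE (k l : Fin 3) (φ : W) :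
    evE k (tensE W l φ) = if k = l then φ else 0 := by
  rw [evE_apply, tensE_coord]

lemma rhoT_coord (A : Fin 3 → W →ₗ[ℂ] W)
    (ρT : Fin 3 → (PiLp 2 fun _ : Fin 3 => W) →ₗ[ℂ] (PiLp 2 fun _ : Fin 3 => W))
    (hρT : ∀ k f i, (WithLp.equiv 2 (∀ _ : Fin 3, W)) (ρT k f) i
      = A k ((WithLp.equiv 2 (∀ _ : Fin 3, W)) f i)
        + ∑ m, ((2 * epsLC k m i : ℤ) : ℂ) • (WithLp.equiv 2 (∀ _ : Fin 3, W)) f m)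
    (i l : Fin 3) (φ : W) (b : Fin 3) :
    WithLp.equiv 2 (∀ _ : Fin 3, W) (ρT i (tensE W l φ)) b
      = (if b = l then A i φ else 0) + ((2 * epsLC i l b : ℤ) : ℂ) • φ := by
  rw [hρT]
  congr 1
  · rw [tensE_coord]
    split <;> simp
  · rw [Finset.sum_eq_single l]
    · rw [tensE_coord]; simp
    · intro m _ hm
      rw [tensE_coord]
      simp [hm]
    · simp

lemma eps_cc : ∀ l b : Fin 3,
    (∑ i, ∑ m, (2 * epsLC i m b) * (2 * epsLC i l m)) = if b = l then -8 else 0 := by decide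

/-- The auxiliary "derivative part" operator `D_l = Σ_{i,b} ε_{ilb} (·⊗e_b) ∘ A_i`. -/
noncomputable def DD (A : Fin 3 → W →ₗ[ℂ] W) (l : Fin 3) :
    W →ₗ[ℂ] PiLp 2 fun _ : Fin 3 => W :=
  ∑ i, ∑ b, ((epsLC i l b : ℤ) : ℂ) • (tensE W b ∘ₗ A i)

lemma C_tensE (A : Fin 3 → W →ₗ[ℂ] W)
    (ρT : Fin 3 → (PiLp 2 fun _ : Fin 3 => W) →ₗ[ℂ] (PiLp 2 fun _ : Fin 3 => W))
    (hρT : ∀ k f i, (WithLp.equiv 2 (∀ _ : Fin 3, W)) (ρT k f) i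
      = A k ((WithLp.equiv 2 (∀ _ : Fin 3, W)) f i)
        + ∑ m, ((2 * epsLC k m i : ℤ) : ℂ) • (WithLp.equiv 2 (∀ _ : Fin 3, W)) f m)
    (c : ℂ) (hcas : ∑ i, A i ∘ₗ A i = c • LinearMap.id) (l : Fin 3) :
    (∑ i, ρT i ∘ₗ ρT i) ∘ₗ tensE W l
      = (c - 8) • tensE W l + (4:ℂ) • DD A l := by
  apply LinearMap.ext; intro φ
  apply ext_coord; intro b
  have hcoord : ∀ i, evE b (ρT i (ρT i (tensE W l φ)))
      = (if b = l then A i (A i φ) else 0) + ((2 * epsLC i l b : ℤ) : ℂ) • A i φ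
        + (((2 * epsLC i l b : ℤ) : ℂ) • A i φ
          + ((∑ m, ((2 * epsLC i m b) * (2 * epsLC i l m)) : ℤ) : ℂ) • φ) := by
    intro i
    have hmm : ∀ m : Fin 3, ((2 * epsLC i m b : ℤ) : ℂ)
          • (WithLp.equiv 2 (∀ _ : Fin 3, W)) (ρT i (tensE W l φ)) m
        = (if m = l then ((2 * epsLC i m b : ℤ) : ℂ) • A i φ else 0)
          + (((2 * epsLC i m b) * (2 * epsLC i l m) : ℤ) : ℂ) • φ := by
      intro m
      rw [rhoT_coord A ρT hρT, smul_add]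
      congr 1
      · split <;> simp
      · rw [smul_smul]; push_cast; ring_nf
    rw [evE_apply, hρT]
    congr 1
    · rw [rhoT_coord A ρT hρT, map_add, map_smul]
      congr 1
      split <;> simp
    · rw [Finset.sum_congr rfl (fun m _ => hmm m), Finset.sum_add_distrib,
        Finset.sum_ite_eq' Finset.univ l]
      simp only [Finset.mem_univ, if_true]
      congr 1
      rw [← Finset.sum_smul]
      norm_cast
  have hL : evE b (((∑ i, ρT i ∘ₗ ρT i) ∘ₗ tensE W l) φ)
      = ∑ i, evE b (ρT i (ρT i (tensE W l φ))) := by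
    simp [LinearMap.sum_apply]
  have hTb : ∀ (i m : Fin 3), evE b ((((epsLC i l m : ℤ) : ℂ) • (tensE W m ∘ₗ A i)) φ)
      = if b = m then ((epsLC i l m : ℤ) : ℂ) • A i φ else 0 := by
    intro i m
    rw [LinearMap.smul_apply, map_smul, evE_apply, LinearMap.comp_apply, tensE_coord]
    split <;> simp
  have hR : evE b (((c - 8) • tensE W l + (4:ℂ) • DD A l) φ)
      = (c - 8) • (if b = l then φ else 0)
        + (4:ℂ) • ∑ i, ((epsLC i l b : ℤ) : ℂ) • A i φ := by
    rw [DD, LinearMap.add_apply, map_add, LinearMap.smul_apply, map_smul, evE_apply, tensE_coord,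
      LinearMap.smul_apply, map_smul, LinearMap.sum_apply, map_sum]
    congr 2
    refine Finset.sum_congr rfl (fun i _ => ?_)
    rw [LinearMap.sum_apply, map_sum, Finset.sum_congr rfl (fun m _ => hTb i m),
      Finset.sum_ite_eq Finset.univ b]
    simp
  rw [hL, hR, Finset.sum_congr rfl (fun i _ => hcoord i)]
  rw [Finset.sum_add_distrib, Finset.sum_add_distrib, Finset.sum_add_distrib]
  have h1 : (∑ i, if b = l then A i (A i φ) else 0) = if b = l then c • φ else 0 := by
    split
    · have := congrArg (fun (f : W →ₗ[ℂ] W) => f φ) hcas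
      simpa [LinearMap.sum_apply] using this
    · simp
  have h4 : (∑ i : Fin 3, ((∑ m, ((2 * epsLC i m b) * (2 * epsLC i l m)) : ℤ) : ℂ) • φ)
      = if b = l then ((-8 : ℤ) : ℂ) • φ else (0:W) := by
    rw [← Finset.sum_smul, ← Int.cast_sum, eps_cc l b]
    split <;> simp
  rw [h1, h4]
  have h23 : ∀ i : Fin 3, ((2 * epsLC i l b : ℤ) : ℂ) • A i φ
      = (2:ℂ) • (((epsLC i l b : ℤ) : ℂ) • A i φ) := by
    intro i; rw [smul_smul]; push_cast; ring_nf
  rw [Finset.sum_congr rfl (fun i _ => h23 i), ← Finset.smul_sum]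
  split <;> (push_cast; module)

lemma evE_DD (A : Fin 3 → W →ₗ[ℂ] W) (k l : Fin 3) (φ : W) :
    evE k (DD A l φ) = ∑ i, ((epsLC i l k : ℤ) : ℂ) • A i φ := by
  rw [DD, LinearMap.sum_apply, map_sum]
  refine Finset.sum_congr rfl (fun i _ => ?_)
  rw [LinearMap.sum_apply, map_sum]
  rw [Finset.sum_eq_single k]
  · simp [evE_tensE]
  · intro m _ hm
    simp [evE_tensE, Ne.symm hm]
  · simp

lemma eps_c2 : ∀ i p l k : Fin 3, (∑ m, epsLC i l m * epsLC p m k)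
    = (if i = k then 1 else 0) * (if p = l then 1 else 0)
      - (if i = p then 1 else 0) * (if l = k then 1 else 0) := by decide

lemma AA_contract (A : Fin 3 → W →ₗ[ℂ] W) (c : ℂ)
    (hcas : ∑ i, A i ∘ₗ A i = c • LinearMap.id) (k l : Fin 3) :
    (∑ i, ∑ p, (((∑ m, epsLC i l m * epsLC p m k) : ℤ) : ℂ) • (A p ∘ₗ A i))
      = A l ∘ₗ A k - ((if k = l then (1:ℂ) else 0) * c) • LinearMap.id := by
  have hsc : ∀ i p : Fin 3, (((∑ m, epsLC i l m * epsLC p m k) : ℤ) : ℂ)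
      = (if i = k then 1 else 0) * (if p = l then 1 else 0)
        - (if i = p then 1 else 0) * (if l = k then 1 else 0) := by
    intro i p
    rw [eps_c2 i p l k]
    split_ifs <;> norm_num
  rw [Finset.sum_congr rfl (fun i _ => Finset.sum_congr rfl (fun p _ => by rw [hsc i p]))]
  have : ∀ i p : Fin 3, (((if i = k then (1:ℂ) else 0) * (if p = l then 1 else 0)
        - (if i = p then 1 else 0) * (if l = k then 1 else 0)) • (A p ∘ₗ A i))
      = ((if i = k then (1:ℂ) else 0) * (if p = l then 1 else 0)) • (A p ∘ₗ A i)
        - ((if i = p then (1:ℂ) else 0) * (if l = k then 1 else 0)) • (A p ∘ₗ A i) := by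
    intro i p; rw [sub_smul]
  rw [Finset.sum_congr rfl (fun i _ => Finset.sum_congr rfl (fun p _ => this i p))]
  rw [Finset.sum_congr rfl (fun i _ => Finset.sum_sub_distrib _ _), Finset.sum_sub_distrib]
  congr 1
  · rw [Finset.sum_eq_single k]
    · rw [Finset.sum_eq_single l]
      · simp
      · intro p _ hp; simp [hp]
      · simp
    · intro i _ hi
      simp [hi]
    · simp
  · have h2 : ∀ i : Fin 3, (∑ p, ((if i = p then (1:ℂ) else 0) * (if l = k then 1 else 0)) • (A p ∘ₗ A i))
        = (if l = k then (1:ℂ) else 0) • (A i ∘ₗ A i) := by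
      intro i
      rw [Finset.sum_eq_single i]
      · simp
      · intro p _ hp
        simp [Ne.symm hp]
      · simp
    rw [Finset.sum_congr rfl (fun i _ => h2 i), ← Finset.smul_sum, hcas, smul_smul]
    congr 2
    by_cases h : k = l <;> simp [h, eq_comm]

lemma eps_swap : ∀ k l m : Fin 3, epsLC k l m = - epsLC m l k := by decide

end Aux

/-- In dimension 3, the second algebraic Weitzenböck relation
`-(j+1/2)((2j+3)/(4(j+1)))π⁻_{j+1}(e_k)π⁺_j(e_l) + (1/((2j+3)(2j+1)))π_j(e_k)π_j(e_l)
 + (j+3/2)((2j+1)/(4(j+1)))π⁺_{j-1}(e_k)π⁻_j(e_l) = (1/4)π_j([e_k,e_l])` on `W_j`,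
with `[e_k,e_l] = 2Σ_m ε_{klm} e_m` the `su(2)` bracket.  (Same setup and conventions as
the first algebraic Weitzenböck relation.) -/
theorem algebraic_weitzenbock_second (j : ℕ)
    (W Wm Wp : Type*)
    [NormedAddCommGroup W] [InnerProductSpace ℂ W] [FiniteDimensional ℂ W]
    [NormedAddCommGroup Wm] [InnerProductSpace ℂ Wm] [FiniteDimensional ℂ Wm]
    [NormedAddCommGroup Wp] [InnerProductSpace ℂ Wp] [FiniteDimensional ℂ Wp]
    (hdW : Module.finrank ℂ W = 2 * j + 2)
    (hdm : Module.finrank ℂ Wm = 2 * j)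
    (hdp : Module.finrank ℂ Wp = 2 * j + 4)
    (A : Fin 3 → W →ₗ[ℂ] W) (Am : Fin 3 → Wm →ₗ[ℂ] Wm) (Ap : Fin 3 → Wp →ₗ[ℂ] Wp)
    (hAskew : ∀ k, LinearMap.adjoint (A k) = -A k)
    (hAmskew : ∀ k, LinearMap.adjoint (Am k) = -Am k)
    (hApskew : ∀ k, LinearMap.adjoint (Ap k) = -Ap k)
    (hAbr : ∀ k l, A k ∘ₗ A l - A l ∘ₗ A k = ∑ m, ((2 * epsLC k l m : ℤ) : ℂ) • A m)
    (hAmbr : ∀ k l, Am k ∘ₗ Am l - Am l ∘ₗ Am k = ∑ m, ((2 * epsLC k l m : ℤ) : ℂ) • Am m)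
    (hApbr : ∀ k l, Ap k ∘ₗ Ap l - Ap l ∘ₗ Ap k = ∑ m, ((2 * epsLC k l m : ℤ) : ℂ) • Ap m)
    (hcasW : ∑ i, A i ∘ₗ A i = (-((2 * (j : ℂ) + 1) * (2 * (j : ℂ) + 3))) • LinearMap.id)
    (hcasm : ∑ i, Am i ∘ₗ Am i = (-((2 * (j : ℂ) - 1) * (2 * (j : ℂ) + 1))) • LinearMap.id)
    (hcasp : ∑ i, Ap i ∘ₗ Ap i = (-((2 * (j : ℂ) + 3) * (2 * (j : ℂ) + 5))) • LinearMap.id)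
    (hirr : ∀ q : Submodule ℂ W, (∀ i, q.map (A i) ≤ q) → q = ⊥ ∨ q = ⊤)
    (ρT : Fin 3 → (PiLp 2 fun _ : Fin 3 => W) →ₗ[ℂ] (PiLp 2 fun _ : Fin 3 => W))
    (hρT : ∀ k f i, (WithLp.equiv 2 (∀ _ : Fin 3, W)) (ρT k f) i
      = A k ((WithLp.equiv 2 (∀ _ : Fin 3, W)) f i)
        + ∑ m, ((2 * epsLC k m i : ℤ) : ℂ) • (WithLp.equiv 2 (∀ _ : Fin 3, W)) f m)
    (ι0 : W →ₗ[ℂ] PiLp 2 fun _ : Fin 3 => W)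
    (ιm : Wm →ₗ[ℂ] PiLp 2 fun _ : Fin 3 => W)
    (ιp : Wp →ₗ[ℂ] PiLp 2 fun _ : Fin 3 => W)
    (h0iso : LinearMap.adjoint ι0 ∘ₗ ι0 = LinearMap.id)
    (hmiso : LinearMap.adjoint ιm ∘ₗ ιm = LinearMap.id)
    (hpiso : LinearMap.adjoint ιp ∘ₗ ιp = LinearMap.id)
    (hcomplete : ι0 ∘ₗ LinearMap.adjoint ι0 + ιm ∘ₗ LinearMap.adjoint ιm
      + ιp ∘ₗ LinearMap.adjoint ιp = LinearMap.id)
    (h0equiv : ∀ k, ι0 ∘ₗ A k = ρT k ∘ₗ ι0)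
    (hmequiv : ∀ k, ιm ∘ₗ Am k = ρT k ∘ₗ ιm)
    (hpequiv : ∀ k, ιp ∘ₗ Ap k = ρT k ∘ₗ ιp) :
    ∀ k l,
      ((-((j : ℂ) + 1 / 2)) * ((2 * (j : ℂ) + 3) / (4 * ((j : ℂ) + 1)))) •
        ((-(LinearMap.adjoint (((Real.sqrt (4 * ((j : ℝ) + 1) / (2 * (j : ℝ) + 3)) : ℝ) : ℂ) • (LinearMap.adjoint ιp ∘ₗ tensE W k)))) ∘ₗ (((Real.sqrt (4 * ((j : ℝ) + 1) / (2 * (j : ℝ) + 3)) : ℝ) : ℂ) • (LinearMap.adjoint ιp ∘ₗ tensE W l)))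
      + (1 / ((2 * (j : ℂ) + 3) * (2 * (j : ℂ) + 1))) • (A k ∘ₗ A l)
      + ((((j : ℂ) + 3 / 2)) * ((2 * (j : ℂ) + 1) / (4 * ((j : ℂ) + 1)))) •
        ((-(LinearMap.adjoint (((Real.sqrt (4 * ((j : ℝ) + 1) / (2 * (j : ℝ) + 1)) : ℝ) : ℂ) • (LinearMap.adjoint ιm ∘ₗ tensE W k)))) ∘ₗ (((Real.sqrt (4 * ((j : ℝ) + 1) / (2 * (j : ℝ) + 1)) : ℝ) : ℂ) • (LinearMap.adjoint ιm ∘ₗ tensE W l)))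
      = (1 / 4 : ℂ) • ∑ m, ((2 * epsLC k l m : ℤ) : ℂ) • A m := by
  intro k l
  -- scalar abbreviations
  set c0 : ℂ := -((2 * (j : ℂ) + 1) * (2 * (j : ℂ) + 3)) with hc0def
  set cmv : ℂ := -((2 * (j : ℂ) - 1) * (2 * (j : ℂ) + 1)) with hcmdef
  set cpv : ℂ := -((2 * (j : ℂ) + 3) * (2 * (j : ℂ) + 5)) with hcpdef
  have hj1 : ((j : ℂ) + 1) ≠ 0 := by
    have : ((j : ℂ) + 1) = ((j + 1 : ℕ) : ℂ) := by push_cast; ring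
    rw [this]; exact Nat.cast_ne_zero.mpr (by omega)
  have h2j1 : (2 * (j : ℂ) + 1) ≠ 0 := by
    have : (2 * (j : ℂ) + 1) = ((2 * j + 1 : ℕ) : ℂ) := by push_cast; ring
    rw [this]; exact Nat.cast_ne_zero.mpr (by omega)
  have h2j3 : (2 * (j : ℂ) + 3) ≠ 0 := by
    have : (2 * (j : ℂ) + 3) = ((2 * j + 3 : ℕ) : ℂ) := by push_cast; ring
    rw [this]; exact Nat.cast_ne_zero.mpr (by omega)
  -- operators
  set Cop : (PiLp 2 fun _ : Fin 3 => W) →ₗ[ℂ] (PiLp 2 fun _ : Fin 3 => W) :=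
    ∑ i, ρT i ∘ₗ ρT i with hCopdef
  set X0 : W →ₗ[ℂ] W := (evE k ∘ₗ ι0) ∘ₗ (LinearMap.adjoint ι0 ∘ₗ tensE W l) with hX0def
  set Xm : W →ₗ[ℂ] W := (evE k ∘ₗ ιm) ∘ₗ (LinearMap.adjoint ιm ∘ₗ tensE W l) with hXmdef
  set Xp : W →ₗ[ℂ] W := (evE k ∘ₗ ιp) ∘ₗ (LinearMap.adjoint ιp ∘ₗ tensE W l) with hXpdef
  set Ee : W →ₗ[ℂ] W := ∑ i, ((epsLC i l k : ℤ) : ℂ) • A i with hEedef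
  set dl : ℂ := if k = l then 1 else 0 with hdldef
  -- pointwise equivariance
  have he0 : ∀ (i : Fin 3) (x : W), ρT i (ι0 x) = ι0 (A i x) :=
    fun i x => (congrArg (fun f => f x) (h0equiv i)).symm
  have hem : ∀ (i : Fin 3) (x : Wm), ρT i (ιm x) = ιm (Am i x) :=
    fun i x => (congrArg (fun f => f x) (hmequiv i)).symm
  have hep : ∀ (i : Fin 3) (x : Wp), ρT i (ιp x) = ιp (Ap i x) :=
    fun i x => (congrArg (fun f => f x) (hpequiv i)).symm
  -- Casimir acts as scalar on each isotypic summand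
  have hC0 : ∀ x : W, Cop (ι0 x) = c0 • ι0 x := by
    intro x
    rw [hCopdef]
    simp only [LinearMap.sum_apply, LinearMap.comp_apply]
    rw [Finset.sum_congr rfl (fun i _ => by rw [he0 i x, he0 i (A i x)]), ← map_sum]
    have := congrArg (fun (f : W →ₗ[ℂ] W) => f x) hcasW
    simp only [LinearMap.sum_apply, LinearMap.comp_apply, LinearMap.smul_apply,
      LinearMap.id_apply] at this
    rw [this, map_smul]
  have hCm : ∀ x : Wm, Cop (ιm x) = cmv • ιm x := by
    intro x
    rw [hCopdef]
    simp only [LinearMap.sum_apply, LinearMap.comp_apply]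
    rw [Finset.sum_congr rfl (fun i _ => by rw [hem i x, hem i (Am i x)]), ← map_sum]
    have := congrArg (fun (f : Wm →ₗ[ℂ] Wm) => f x) hcasm
    simp only [LinearMap.sum_apply, LinearMap.comp_apply, LinearMap.smul_apply,
      LinearMap.id_apply] at this
    rw [this, map_smul]
  have hCp : ∀ x : Wp, Cop (ιp x) = cpv • ιp x := by
    intro x
    rw [hCopdef]
    simp only [LinearMap.sum_apply, LinearMap.comp_apply]
    rw [Finset.sum_congr rfl (fun i _ => by rw [hep i x, hep i (Ap i x)]), ← map_sum]
    have := congrArg (fun (f : Wp →ₗ[ℂ] Wp) => f x) hcasp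
    simp only [LinearMap.sum_apply, LinearMap.comp_apply, LinearMap.smul_apply,
      LinearMap.id_apply] at this
    rw [this, map_smul]
  -- completeness, pointwise
  have hcompl : ∀ y : PiLp 2 fun _ : Fin 3 => W,
      ι0 (LinearMap.adjoint ι0 y) + ιm (LinearMap.adjoint ιm y) + ιp (LinearMap.adjoint ιp y)
        = y := by
    intro y
    have := congrArg (fun (f : (PiLp 2 fun _ : Fin 3 => W) →ₗ[ℂ] (PiLp 2 fun _ : Fin 3 => W)) => f y) hcomplete
    simpa using this
  -- the Casimir on tensE, pointwise
  have hCT : ∀ (l' : Fin 3) (φ : W), Cop (tensE W l' φ)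
      = (c0 - 8) • tensE W l' φ + (4:ℂ) • DD A l' φ := by
    intro l' φ
    have := congrArg (fun f => f φ) (C_tensE A ρT hρT c0 hcasW l')
    simpa [hCopdef] using this
  -- Casimir on DD, pointwise
  have hCD : ∀ (l' : Fin 3) (φ : W), Cop (DD A l' φ)
      = (c0 - 8) • DD A l' φ
        + (4:ℂ) • ∑ i, ∑ b, ((epsLC i l' b : ℤ) : ℂ) • DD A b (A i φ) := by
    intro l' φ
    have h1 : DD A l' φ = ∑ i, ∑ b, ((epsLC i l' b : ℤ) : ℂ) • tensE W b (A i φ) := by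
      simp [DD, LinearMap.sum_apply]
    rw [h1, map_sum]
    rw [Finset.sum_congr rfl (fun i _ => map_sum Cop _ Finset.univ)]
    rw [Finset.sum_congr rfl (fun i _ => Finset.sum_congr rfl (fun b _ => by
      rw [map_smul, hCT b (A i φ)]))]
    rw [Finset.sum_congr rfl (fun i _ => Finset.sum_congr rfl (fun b _ => smul_add _ _ _))]
    rw [Finset.sum_congr rfl (fun i _ => Finset.sum_add_distrib), Finset.sum_add_distrib]
    congr 1
    · rw [Finset.smul_sum]
      refine Finset.sum_congr rfl (fun i _ => ?_)
      rw [Finset.smul_sum]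
      refine Finset.sum_congr rfl (fun b _ => ?_)
      rw [smul_comm]
    · rw [Finset.smul_sum]
      refine Finset.sum_congr rfl (fun i _ => ?_)
      rw [Finset.smul_sum]
      refine Finset.sum_congr rfl (fun b _ => ?_)
      rw [smul_comm]
  have hev : ∀ φ : W, evE k (tensE W l φ) = dl • φ := by
    intro φ
    rw [evE_tensE, hdldef]
    split <;> simp
  have hevD : ∀ φ : W, evE k (DD A l φ) = Ee φ := by
    intro φ
    rw [evE_DD, hEedef]
    simp [LinearMap.sum_apply]
  -- the three linear equations
  have h1 : X0 + Xm + Xp = dl • LinearMap.id := by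
    ext φ
    simp only [LinearMap.add_apply, LinearMap.smul_apply, LinearMap.id_apply,
      hX0def, hXmdef, hXpdef, LinearMap.comp_apply]
    rw [← map_add, ← map_add, hcompl (tensE W l φ), hev φ]
  have h2 : c0 • X0 + cmv • Xm + cpv • Xp = ((c0 - 8) * dl) • LinearMap.id + (4:ℂ) • Ee := by
    ext φ
    simp only [LinearMap.add_apply, LinearMap.smul_apply, LinearMap.id_apply,
      hX0def, hXmdef, hXpdef, LinearMap.comp_apply]
    rw [show c0 • evE k (ι0 (LinearMap.adjoint ι0 (tensE W l φ)))
        = evE k (Cop (ι0 (LinearMap.adjoint ι0 (tensE W l φ)))) by rw [hC0, map_smul]]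
    rw [show cmv • evE k (ιm (LinearMap.adjoint ιm (tensE W l φ)))
        = evE k (Cop (ιm (LinearMap.adjoint ιm (tensE W l φ)))) by rw [hCm, map_smul]]
    rw [show cpv • evE k (ιp (LinearMap.adjoint ιp (tensE W l φ)))
        = evE k (Cop (ιp (LinearMap.adjoint ιp (tensE W l φ)))) by rw [hCp, map_smul]]
    rw [← map_add (evE k), ← map_add (evE k), ← map_add Cop, ← map_add Cop,
      hcompl (tensE W l φ), hCT l φ, map_add, map_smul, map_smul, hev φ, hevD φ]
    module
  have h3 : (c0 * c0) • X0 + (cmv * cmv) • Xm + (cpv * cpv) • Xp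
      = (((c0 - 8) * (c0 - 8)) * dl) • LinearMap.id + ((8:ℂ) * (c0 - 8)) • Ee
        + (16:ℂ) • (A l ∘ₗ A k) - ((16:ℂ) * (dl * c0)) • LinearMap.id := by
    ext φ
    simp only [LinearMap.add_apply, LinearMap.sub_apply, LinearMap.smul_apply,
      LinearMap.id_apply, hX0def, hXmdef, hXpdef, LinearMap.comp_apply]
    rw [show (c0 * c0) • evE k (ι0 (LinearMap.adjoint ι0 (tensE W l φ)))
        = evE k (Cop (Cop (ι0 (LinearMap.adjoint ι0 (tensE W l φ))))) by
      rw [show Cop (Cop (ι0 (LinearMap.adjoint ι0 (tensE W l φ))))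
          = (c0 * c0) • ι0 (LinearMap.adjoint ι0 (tensE W l φ)) by
        rw [hC0, map_smul, hC0, smul_smul], map_smul]]
    rw [show (cmv * cmv) • evE k (ιm (LinearMap.adjoint ιm (tensE W l φ)))
        = evE k (Cop (Cop (ιm (LinearMap.adjoint ιm (tensE W l φ))))) by
      rw [show Cop (Cop (ιm (LinearMap.adjoint ιm (tensE W l φ))))
          = (cmv * cmv) • ιm (LinearMap.adjoint ιm (tensE W l φ)) by
        rw [hCm, map_smul, hCm, smul_smul], map_smul]]
    rw [show (cpv * cpv) • evE k (ιp (LinearMap.adjoint ιp (tensE W l φ)))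
        = evE k (Cop (Cop (ιp (LinearMap.adjoint ιp (tensE W l φ))))) by
      rw [show Cop (Cop (ιp (LinearMap.adjoint ιp (tensE W l φ))))
          = (cpv * cpv) • ιp (LinearMap.adjoint ιp (tensE W l φ)) by
        rw [hCp, map_smul, hCp, smul_smul], map_smul]]
    rw [← map_add (evE k), ← map_add (evE k), ← map_add Cop, ← map_add Cop,
      ← map_add Cop, ← map_add Cop, hcompl (tensE W l φ)]
    rw [hCT l φ, map_add, map_smul, map_smul, hCT l φ, hCD l φ]
    have hdd : evE k (∑ i, ∑ b, ((epsLC i l b : ℤ) : ℂ) • DD A b (A i φ))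
        = A l (A k φ) - (dl * c0) • φ := by
      have step1 : evE k (∑ i, ∑ b, ((epsLC i l b : ℤ) : ℂ) • DD A b (A i φ))
          = ∑ i, ∑ b, ∑ p, (((epsLC i l b * epsLC p b k) : ℤ) : ℂ) • A p (A i φ) := by
        rw [map_sum]
        refine Finset.sum_congr rfl (fun i _ => ?_)
        rw [map_sum]
        refine Finset.sum_congr rfl (fun b _ => ?_)
        rw [map_smul, evE_DD, Finset.smul_sum]
        refine Finset.sum_congr rfl (fun p _ => ?_)
        rw [smul_smul]
        norm_cast
      have step2 : (∑ i : Fin 3, ∑ b : Fin 3, ∑ p : Fin 3,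
            (((epsLC i l b * epsLC p b k) : ℤ) : ℂ) • A p (A i φ))
          = ∑ i : Fin 3, ∑ p : Fin 3, (((∑ m, epsLC i l m * epsLC p m k) : ℤ) : ℂ) • A p (A i φ) := by
        refine Finset.sum_congr rfl (fun i _ => ?_)
        rw [Finset.sum_comm]
        refine Finset.sum_congr rfl (fun p _ => ?_)
        rw [← Finset.sum_smul]
        norm_cast
      rw [step1, step2]
      have := congrArg (fun f => f φ) (AA_contract A c0 hcasW k l)
      simp only [LinearMap.sum_apply, LinearMap.smul_apply, LinearMap.sub_apply,
        LinearMap.comp_apply, LinearMap.id_apply] at this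
      rw [this, ← hdldef]
    simp only [map_add, map_smul, hev, hevD, hdd]
    module
  -- bracket relation and index swap
  have hGF : A k ∘ₗ A l = A l ∘ₗ A k + ∑ m, ((2 * epsLC k l m : ℤ) : ℂ) • A m := by
    have h := hAbr k l
    rw [sub_eq_iff_eq_add] at h
    rw [h, add_comm]
  have hSE : (∑ m, ((2 * epsLC k l m : ℤ) : ℂ) • A m) = (-2 : ℂ) • Ee := by
    rw [hEedef, Finset.smul_sum]
    refine Finset.sum_congr rfl (fun m _ => ?_)
    rw [smul_smul]
    congr 1
    rw [eps_swap k l m]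
    push_cast
    ring
  -- massage the goal terms
  have hadjp : LinearMap.adjoint (((Real.sqrt (4 * ((j : ℝ) + 1) / (2 * (j : ℝ) + 3)) : ℝ) : ℂ)
        • (LinearMap.adjoint ιp ∘ₗ tensE W k))
      = ((Real.sqrt (4 * ((j : ℝ) + 1) / (2 * (j : ℝ) + 3)) : ℝ) : ℂ) • (evE k ∘ₗ ιp) := by
    rw [LinearEquiv.map_smulₛₗ LinearMap.adjoint, LinearMap.adjoint_comp,
      LinearMap.adjoint_adjoint, adjoint_tensE, Complex.conj_ofReal]
  have hadjm : LinearMap.adjoint (((Real.sqrt (4 * ((j : ℝ) + 1) / (2 * (j : ℝ) + 1)) : ℝ) : ℂ)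
        • (LinearMap.adjoint ιm ∘ₗ tensE W k))
      = ((Real.sqrt (4 * ((j : ℝ) + 1) / (2 * (j : ℝ) + 1)) : ℝ) : ℂ) • (evE k ∘ₗ ιm) := by
    rw [LinearEquiv.map_smulₛₗ LinearMap.adjoint, LinearMap.adjoint_comp,
      LinearMap.adjoint_adjoint, adjoint_tensE, Complex.conj_ofReal]
  have hsqp : (((Real.sqrt (4 * ((j : ℝ) + 1) / (2 * (j : ℝ) + 3)) : ℝ) : ℂ)
        * ((Real.sqrt (4 * ((j : ℝ) + 1) / (2 * (j : ℝ) + 3)) : ℝ) : ℂ))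
      = 4 * ((j : ℂ) + 1) / (2 * (j : ℂ) + 3) := by
    rw [← Complex.ofReal_mul, Real.mul_self_sqrt (by positivity)]
    push_cast
    ring
  have hsqm : (((Real.sqrt (4 * ((j : ℝ) + 1) / (2 * (j : ℝ) + 1)) : ℝ) : ℂ)
        * ((Real.sqrt (4 * ((j : ℝ) + 1) / (2 * (j : ℝ) + 1)) : ℝ) : ℂ))
      = 4 * ((j : ℂ) + 1) / (2 * (j : ℂ) + 1) := by
    rw [← Complex.ofReal_mul, Real.mul_self_sqrt (by positivity)]
    push_cast
    ring
  have htermp : (-(LinearMap.adjoint (((Real.sqrt (4 * ((j : ℝ) + 1) / (2 * (j : ℝ) + 3)) : ℝ) : ℂ)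
          • (LinearMap.adjoint ιp ∘ₗ tensE W k))))
        ∘ₗ (((Real.sqrt (4 * ((j : ℝ) + 1) / (2 * (j : ℝ) + 3)) : ℝ) : ℂ)
          • (LinearMap.adjoint ιp ∘ₗ tensE W l))
      = (-(4 * ((j : ℂ) + 1) / (2 * (j : ℂ) + 3))) • Xp := by
    rw [hadjp]
    ext φ
    simp only [LinearMap.comp_apply, LinearMap.neg_apply, LinearMap.smul_apply, map_smul,
      hXpdef, smul_neg, smul_smul, neg_smul, neg_inj]
    rw [hsqp]
  have htermm : (-(LinearMap.adjoint (((Real.sqrt (4 * ((j : ℝ) + 1) / (2 * (j : ℝ) + 1)) : ℝ) : ℂ)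
          • (LinearMap.adjoint ιm ∘ₗ tensE W k))))
        ∘ₗ (((Real.sqrt (4 * ((j : ℝ) + 1) / (2 * (j : ℝ) + 1)) : ℝ) : ℂ)
          • (LinearMap.adjoint ιm ∘ₗ tensE W l))
      = (-(4 * ((j : ℂ) + 1) / (2 * (j : ℂ) + 1))) • Xm := by
    rw [hadjm]
    ext φ
    simp only [LinearMap.comp_apply, LinearMap.neg_apply, LinearMap.smul_apply, map_smul,
      hXmdef, smul_neg, smul_smul, neg_smul, neg_inj]
    rw [hsqm]
  rw [htermp, htermm, smul_smul, smul_smul, hGF, hSE]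
  rw [show ((-((j : ℂ) + 1 / 2)) * ((2 * (j : ℂ) + 3) / (4 * ((j : ℂ) + 1))))
        * (-(4 * ((j : ℂ) + 1) / (2 * (j : ℂ) + 3))) = (j:ℂ) + 1/2 from by
      field_simp
      rw [mul_div_cancel_right₀ _ (by rw [mul_comm]; exact h2j3)]]
  rw [show ((((j : ℂ) + 3 / 2)) * ((2 * (j : ℂ) + 1) / (4 * ((j : ℂ) + 1))))
        * (-(4 * ((j : ℂ) + 1) / (2 * (j : ℂ) + 1))) = -((j:ℂ) + 3/2) from by
      field_simp
      rw [mul_div_cancel_right₀ _ (by rw [mul_comm]; exact h2j1)]]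
  have hquad : (4 * (j:ℂ)^2 + 8 * (j:ℂ) + 3) ≠ 0 := by
    have : (4 * (j:ℂ)^2 + 8 * (j:ℂ) + 3) = (2 * (j:ℂ) + 1) * (2 * (j:ℂ) + 3) := by ring
    rw [this]
    exact mul_ne_zero h2j1 h2j3
  have hwne : ((2 * (j:ℂ) + 1) * (2 * (j:ℂ) + 3)) ≠ 0 := mul_ne_zero h2j1 h2j3
  refine smul_right_injective (W →ₗ[ℂ] W) hwne ?_
  beta_reduce
  linear_combination (norm := match_scalars <;> (field_simp [hj1, h2j1, h2j3, hquad]; ring1))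
    ((-((2 * (j:ℂ) + 1) * (2 * (j:ℂ) + 3) * (12 * (j:ℂ)^2 + 24 * (j:ℂ) + 17)) / 16 : ℂ) • h1)
    + ((-(4 * (j:ℂ)^2 + 8 * (j:ℂ) + 5) / 4 : ℂ) • h2)
    + ((-1 / 16 : ℂ) • h3)
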